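/- There exists an absolute constant C > 0 such that: if N ≥ 2, H ≥ 1, and {N+1,…,N+H} is an interval whose product (N+1)⋯(N+H) has the same squarefree component as a! for some natural number a with 1 ≤ a < N, then H ≤ N and a ≤ C·H·log N. -/

import Mathlib

/-- The product `(N+1) ⋯ (N+H)`. -/
def intervalProd (N H : ℕ) : ℕ := ∏ i ∈ Finset.Icc 1 H, (N + i)

/-- The squarefree component of `n`: the squarefree number `s` such that `n = s·m²`
(the product of primes dividing `n` to an odd power). -/
def sqfreePart (n : ℕ) : ℕ := ∏ p ∈ n.primeFactors, p ^ (n.factorization p % 2)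

/-- The interval `{N+1, …, N+H}` is of type `F₃`: its product has the same squarefree
component as `a!` for some `1 ≤ a < N`. -/
def IsF3Interval (N H : ℕ) : Prop :=
  1 ≤ H ∧ ∃ a : ℕ, 1 ≤ a ∧ a < N ∧
    sqfreePart (intervalProd N H) = sqfreePart (Nat.factorial a)

/-- `ℱ₃`: natural numbers of the form `N+H` for some type `F₃` interval `{N+1,…,N+H}`. -/
def F3 : Set ℕ := {n | ∃ N H : ℕ, IsF3Interval N H ∧ n = N + H}

/-- `ℱ₃¹`: natural numbers `n` with `s(n) = s(a!)` for some `1 ≤ a < n - 1`. -/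
def F31 : Set ℕ :=
  {n | ∃ a : ℕ, 1 ≤ a ∧ a + 1 < n ∧ sqfreePart n = sqfreePart (Nat.factorial a)}

/-- The number of elements of `S` in `[1, x]`. -/
noncomputable def countIn (S : Set ℕ) (x : ℝ) : ℕ :=
  Set.ncard {n : ℕ | n ∈ S ∧ 1 ≤ n ∧ (n : ℝ) ≤ x}

/-! ### Auxiliary lemmas -/

lemma sqfreePart_dvd (n : ℕ) : sqfreePart n ∣ n := by
  rcases eq_or_ne n 0 with rfl | hn
  · exact dvd_zero _
  · conv_rhs => rw [← Nat.factorization_prod_pow_eq_self hn]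
    rw [Finsupp.prod, Nat.support_factorization]
    exact Finset.prod_dvd_prod_of_dvd _ _ fun p _ => pow_dvd_pow p (Nat.mod_le _ _)

lemma prime_dvd_sqfreePart {p n : ℕ} (hn : n ≠ 0) (hp : p.Prime)
    (h : n.factorization p % 2 = 1) : p ∣ sqfreePart n := by
  have hmem : p ∈ n.primeFactors := by
    rw [Nat.mem_primeFactors]
    exact ⟨hp, Nat.dvd_of_factorization_pos (by omega), hn⟩
  have := Finset.dvd_prod_of_mem (fun q => q ^ (n.factorization q % 2)) hmem
  simpa [h, sqfreePart] using this

lemma intervalProd_pos (N H : ℕ) : 0 < intervalProd N H :=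
  Finset.prod_pos fun i hi => by have := (Finset.mem_Icc.mp hi).1; omega

lemma factorization_factorial_eq_one {a p : ℕ} (hp : p.Prime) (hpa : p ≤ a) (h2p : a < 2 * p)
    (hsq : a < p ^ 2) : (a.factorial).factorization p = 1 := by
  have : Fact p.Prime := ⟨hp⟩
  rw [Nat.factorization_def _ hp,
    padicValNat_factorial (b := 2) (Nat.log_lt_of_lt_pow (by omega) hsq)]
  rw [Finset.sum_Ico_eq_sum_range]
  simp only [show 2 - 1 = 1 from rfl, Finset.sum_range_one]
  rw [add_zero, pow_one]
  exact Nat.div_eq_of_lt_le (by omega) (by omega)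

lemma factorization_intervalProd_eq_one {N H q : ℕ} (hq : q.Prime) (h1 : N < q)
    (h2 : q ≤ N + H) (h3 : N + H < 2 * q) :
    (intervalProd N H).factorization q = 1 := by
  rw [intervalProd, Nat.factorization_prod
    (fun i hi => by have := (Finset.mem_Icc.mp hi).1; omega)]
  rw [Finsupp.finset_sum_apply]
  rw [Finset.sum_eq_single_of_mem (q - N) (Finset.mem_Icc.mpr (by omega)) ?side]
  · rw [show N + (q - N) = q by omega, hq.factorization_self]
  case side =>
    intro i hi hne
    rw [Finset.mem_Icc] at hi
    apply Nat.factorization_eq_zero_of_not_dvd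
    rintro ⟨k, hk⟩
    have hk2 : k = 0 ∨ k = 1 ∨ 2 ≤ k := by omega
    rcases hk2 with rfl | rfl | hk2
    · omega
    · omega
    · have : 2 * q ≤ q * k := by
        calc 2 * q = q * 2 := by ring
        _ ≤ q * k := Nat.mul_le_mul_left q hk2
      omega

lemma H_le_N {N H a : ℕ} (hH : 1 ≤ H) (haN : a < N)
    (heq : sqfreePart (intervalProd N H) = sqfreePart a.factorial) : H ≤ N := by
  by_contra hc
  push_neg at hc
  obtain ⟨q, hq, hq1, hq2⟩ := Nat.exists_prime_lt_and_le_two_mul ((N + H) / 2) (by omega)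
  have h1 : N < q := by omega
  have h2 : q ≤ N + H := by omega
  have h3 : N + H < 2 * q := by omega
  have hfac := factorization_intervalProd_eq_one hq h1 h2 h3
  have hdvd : q ∣ sqfreePart (intervalProd N H) :=
    prime_dvd_sqfreePart (intervalProd_pos N H).ne' hq (by rw [hfac])
  rw [heq] at hdvd
  have : q ∣ a.factorial := hdvd.trans (sqfreePart_dvd _)
  have := (Nat.Prime.dvd_factorial hq).mp this
  omega

open Nat in
theorem centralBinom_le_prod (n : ℕ) (n_large : 2 < n) :
    centralBinom n ≤ (2 * n) ^ Nat.sqrt (2 * n) * 4 ^ (2 * n / 3) *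
      ∏ p ∈ (Finset.Ioc n (2 * n)).filter Nat.Prime, p := by
  have n_pos : 0 < n := by omega
  have n2_pos : 1 ≤ 2 * n := by omega
  let S := (Finset.range (2 * n + 1)).filter Nat.Prime
  let f : ℕ → ℕ := fun x => x ^ n.centralBinom.factorization x
  have hSfull : ∏ x ∈ S, f x = ∏ x ∈ Finset.range (2 * n + 1), f x := by
    refine Finset.prod_filter_of_ne fun p _ h => ?_
    contrapose! h; dsimp only [f]
    rw [Nat.factorization_eq_zero_of_not_prime n.centralBinom h, _root_.pow_zero]
  have key : centralBinom n = ∏ x ∈ S, f x := by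
    rw [hSfull, n.prod_pow_factorization_centralBinom]
  rw [key, ← Finset.prod_filter_mul_prod_filter_not S (· ≤ 2 * n / 3)]
  have hA : ∏ x ∈ S.filter (· ≤ 2 * n / 3), f x ≤
      (2 * n) ^ Nat.sqrt (2 * n) * 4 ^ (2 * n / 3) := by
    rw [← Finset.prod_filter_mul_prod_filter_not (S.filter (· ≤ 2 * n / 3))
      (· ≤ Nat.sqrt (2 * n))]
    apply Nat.mul_le_mul
    · refine (Finset.prod_le_prod' fun p _ => (?_ : f p ≤ 2 * n)).trans ?_
      · exact pow_factorization_choose_le (by omega)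
      have hcard : (Finset.Icc 1 (Nat.sqrt (2 * n))).card = Nat.sqrt (2 * n) := by
        rw [Nat.card_Icc, Nat.add_sub_cancel]
      rw [Finset.prod_const]
      refine pow_right_mono₀ n2_pos ((Finset.card_le_card fun x hx => ?_).trans hcard.le)
      obtain ⟨h1, h2⟩ := Finset.mem_filter.1 hx
      exact Finset.mem_Icc.mpr
        ⟨(Finset.mem_filter.1 (Finset.mem_filter.1 h1).1).2.one_lt.le, h2⟩
    · refine le_trans ?_ (primorial_le_4_pow (2 * n / 3))
      refine (Finset.prod_le_prod' fun p hp => (?_ : f p ≤ p)).trans ?_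
      · obtain ⟨h1, h2⟩ := Finset.mem_filter.1 hp
        refine (pow_right_mono₀
          (Finset.mem_filter.1 (Finset.mem_filter.1 h1).1).2.one_lt.le ?_).trans (pow_one p).le
        exact Nat.factorization_choose_le_one (Nat.sqrt_lt'.mp <| not_le.1 h2)
      · refine Finset.prod_le_prod_of_subset_of_one_le' ?_ ?_
        · intro p hp
          obtain ⟨h1, _⟩ := Finset.mem_filter.1 hp
          obtain ⟨h3, h4⟩ := Finset.mem_filter.1 h1
          rw [Finset.mem_filter, Finset.mem_range]
          exact ⟨by omega, (Finset.mem_filter.1 h3).2⟩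
        · exact fun p hp _ => (Finset.mem_filter.1 hp).2.one_lt.le
  have hB : ∏ x ∈ S.filter (¬ · ≤ 2 * n / 3), f x ≤
      ∏ p ∈ (Finset.Ioc n (2 * n)).filter Nat.Prime, p := by
    have heq2 : ∏ x ∈ (S.filter (¬ · ≤ 2 * n / 3)).filter (n < ·), f x
        = ∏ x ∈ S.filter (¬ · ≤ 2 * n / 3), f x := by
      refine Finset.prod_filter_of_ne fun p hp h => ?_
      obtain ⟨h1, h2⟩ := Finset.mem_filter.1 hp
      by_contra hpn
      push_neg at hpn
      have hprime := (Finset.mem_filter.1 h1).2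
      have h3p : 2 * n < 3 * p := by
        have := not_le.1 h2
        omega
      dsimp only [f] at h
      rw [Nat.factorization_centralBinom_of_two_mul_self_lt_three_mul n_large hpn h3p,
        _root_.pow_zero] at h
      exact h rfl
    rw [← heq2]
    refine (Finset.prod_le_prod' fun p hp => (?_ : f p ≤ p)).trans ?_
    · obtain ⟨h1, h2⟩ := Finset.mem_filter.1 hp
      have hprime := (Finset.mem_filter.1 (Finset.mem_filter.1 h1).1).2
      refine (pow_right_mono₀ hprime.one_lt.le ?_).trans (pow_one p).le
      apply Nat.factorization_choose_le_one
      have h5 : n < p := (Finset.mem_filter.1 hp).2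
      have h6 : 2 ≤ p := hprime.two_le
      calc 2 * n < 2 * p := by omega
      _ ≤ p * p := Nat.mul_le_mul_right p h6
      _ = p ^ 2 := (sq p).symm
    · refine Finset.prod_le_prod_of_subset_of_one_le' ?_ ?_
      · intro p hp
        obtain ⟨h1, h2⟩ := Finset.mem_filter.1 hp
        obtain ⟨h3, h4⟩ := Finset.mem_filter.1 h1
        have := Finset.mem_range.1 (Finset.mem_filter.1 h3).1
        rw [Finset.mem_filter, Finset.mem_Ioc]
        exact ⟨⟨h2, by omega⟩, (Finset.mem_filter.1 h3).2⟩
      · exact fun p hp _ => (Finset.mem_filter.1 hp).2.one_lt.le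
  exact Nat.mul_le_mul hA hB

lemma arith_aux {x z u v lx lz l4 lP : ℝ}
    (hx : 10 ^ 8 ≤ x) (hz : z = 2 * x) (hv2 : v * v = z) (hu2 : u * u = v)
    (hu118 : 118 ≤ u) (hlz : lz ≤ 4 * u) (hlx : lx ≤ 4 * u) (hl4 : 1.386 ≤ l4)
    (hmain : x * l4 ≤ lx + (v * lz + (2 * x / 3 * l4 + lP))) : x / 10 ≤ lP := by
  have hu0 : (0 : ℝ) < u := by linarith
  have hv : (13924 : ℝ) ≤ v := by nlinarith
  have hv0 : (0 : ℝ) < v := by linarith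
  have f1 : v * lz ≤ 4 * (u * v) := by
    calc v * lz ≤ v * (4 * u) := mul_le_mul_of_nonneg_left hlz hv0.le
    _ = 4 * (u * v) := by ring
  have f2 : 4 * u ≤ 4 * (u * v) := by nlinarith
  have f3 : 118 * (u * v) ≤ z := by
    calc 118 * (u * v) ≤ u * (u * v) :=
          mul_le_mul_of_nonneg_right hu118 (by positivity)
    _ = (u * u) * v := by ring
    _ = v * v := by rw [hu2]
    _ = z := hv2
  have f5 : x / 3 * 1.386 ≤ x / 3 * l4 :=
    mul_le_mul_of_nonneg_left hl4 (by linarith)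
  linarith

lemma log_lower {n P : ℕ} (hn : 10 ^ 8 ≤ n) (hPpos : 0 < P)
    (hP : 4 ^ n ≤ n * ((2 * n) ^ Nat.sqrt (2 * n) * 4 ^ (2 * n / 3) * P)) :
    (n : ℝ) / 10 ≤ Real.log P := by
  have hx : (10 ^ 8 : ℝ) ≤ (n : ℝ) := by exact_mod_cast hn
  have hxpos : (0 : ℝ) < (n : ℝ) := by linarith
  have hc : (4 : ℝ) ^ n ≤
      (n : ℝ) * ((2 * (n : ℝ)) ^ Nat.sqrt (2 * n) * 4 ^ (2 * n / 3) * (P : ℝ)) := by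
    have := (Nat.cast_le (α := ℝ)).mpr hP
    push_cast at this
    convert this using 4
  set x : ℝ := (n : ℝ)
  set z : ℝ := 2 * x with hzdef
  have hzpos : (0 : ℝ) < z := by positivity
  have hlog := Real.log_le_log (by positivity) hc
  rw [Real.log_pow, Real.log_mul (ne_of_gt hxpos) (by positivity),
      Real.log_mul (by positivity) (by positivity),
      Real.log_mul (by positivity) (by positivity),
      Real.log_pow, Real.log_pow] at hlog
  have hs : ((Nat.sqrt (2 * n) : ℕ) : ℝ) ≤ Real.sqrt z := by
    have h := Real.nat_sqrt_le_real_sqrt (a := 2 * n)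
    have heq : Real.sqrt ((2 * n : ℕ) : ℝ) = Real.sqrt z := by
      congr 1; push_cast [hzdef]; ring
    rwa [heq] at h
  have ht : ((2 * n / 3 : ℕ) : ℝ) ≤ 2 * x / 3 := by
    calc ((2 * n / 3 : ℕ) : ℝ) ≤ ((2 * n : ℕ) : ℝ) / ((3 : ℕ) : ℝ) := Nat.cast_div_le
    _ = 2 * x / 3 := by push_cast; ring
  set v : ℝ := Real.sqrt z with hvdef
  set u : ℝ := Real.sqrt v with hudef
  have hv2 : v * v = z := Real.mul_self_sqrt hzpos.le
  have hu2 : u * u = v := Real.mul_self_sqrt (Real.sqrt_nonneg z)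
  have hupos : 0 < u := Real.sqrt_pos.mpr (Real.sqrt_pos.mpr hzpos)
  have hvpos : 0 < v := Real.sqrt_pos.mpr hzpos
  have hu118 : (118 : ℝ) ≤ u := by
    rw [hudef, hvdef]
    have h1 : ((118 : ℝ) ^ 2) ^ 2 ≤ z := by rw [hzdef]; norm_num; linarith
    calc (118 : ℝ) = Real.sqrt (Real.sqrt (((118 : ℝ) ^ 2) ^ 2)) := by
          rw [Real.sqrt_sq (by positivity), Real.sqrt_sq (by norm_num)]
      _ ≤ Real.sqrt (Real.sqrt z) := Real.sqrt_le_sqrt (Real.sqrt_le_sqrt h1)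
  have hlogz : Real.log z = 4 * Real.log u := by
    rw [hudef, hvdef, Real.log_sqrt (Real.sqrt_nonneg z), Real.log_sqrt hzpos.le]; ring
  have hlogu : Real.log u ≤ u := (Real.log_le_sub_one_of_pos hupos).trans (by linarith)
  have hlogzu : Real.log z ≤ 4 * u := by rw [hlogz]; linarith
  have hlogx : Real.log x ≤ 4 * u := by
    have h2 : Real.log x ≤ Real.log z := Real.log_le_log hxpos (by rw [hzdef]; linarith)
    linarith
  have hlog4 : (1.386 : ℝ) ≤ Real.log 4 := by
    rw [show (4 : ℝ) = 2 ^ 2 by norm_num, Real.log_pow]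
    have := Real.log_two_gt_d9
    push_cast
    linarith
  have hmain : x * Real.log 4 ≤
      Real.log x + (v * Real.log z + (2 * x / 3 * Real.log 4 + Real.log P)) := by
    have e1 : ((Nat.sqrt (2 * n) : ℕ) : ℝ) * Real.log z ≤ v * Real.log z := by
      exact mul_le_mul_of_nonneg_right hs (Real.log_nonneg (by linarith))
    have e2 : ((2 * n / 3 : ℕ) : ℝ) * Real.log 4 ≤ 2 * x / 3 * Real.log 4 :=
      mul_le_mul_of_nonneg_right ht (by linarith)
    linarith [hlog]
  exact arith_aux hx hzdef hv2 hu2 hu118 hlogzu hlogx hlog4 hmain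

theorem stmt_12 :
    ∃ C : ℝ, 0 < C ∧ ∀ N H a : ℕ, 2 ≤ N → 1 ≤ H → 1 ≤ a → a < N →
      sqfreePart (intervalProd N H) = sqfreePart (Nat.factorial a) →
      H ≤ N ∧ (a : ℝ) ≤ C * (H : ℝ) * Real.log N := by
  refine ⟨10 ^ 9, by norm_num, fun N H a hN hH ha haN heq => ?_⟩
  have hHN : H ≤ N := H_le_N hH haN heq
  refine ⟨hHN, ?_⟩
  -- basic real facts
  have hlogN : (0.69 : ℝ) ≤ Real.log N := by
    have h2 : Real.log 2 ≤ Real.log N :=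
      Real.log_le_log (by norm_num) (by exact_mod_cast hN)
    linarith [Real.log_two_gt_d9]
  have hH1 : (1 : ℝ) ≤ (H : ℝ) := by exact_mod_cast hH
  have hHlogN : (0.69 : ℝ) ≤ (H : ℝ) * Real.log N := by nlinarith
  -- small case
  rcases lt_or_ge a (2 * 10 ^ 8 + 2) with hsmall | hbig
  · have : (a : ℝ) ≤ 2 * 10 ^ 8 + 2 := by exact_mod_cast hsmall.le
    nlinarith
  -- large case
  · set n := a / 2 with hndef
    have hn8 : 10 ^ 8 ≤ n := by omega
    have hn2 : 2 < n := by omega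
    have h2na : 2 * n ≤ a := by omega
    have ha2n : a ≤ 2 * n + 1 := by omega
    set T := (Finset.Ioc n (2 * n)).filter Nat.Prime with hTdef
    -- each prime in T divides the interval product
    have hdvd : ∀ p ∈ T, p ∣ intervalProd N H := by
      intro p hp
      obtain ⟨hmem, hprime⟩ := Finset.mem_filter.1 hp
      rw [Finset.mem_Ioc] at hmem
      have hfac : (a.factorial).factorization p = 1 := by
        apply factorization_factorial_eq_one hprime (by omega) (by omega)
        have hnp : n + 1 ≤ p := by omega
        have h1 : a < (n + 1) ^ 2 := by nlinarith
        exact lt_of_lt_of_le h1 (Nat.pow_le_pow_left hnp 2)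
      have h2 : p ∣ sqfreePart a.factorial :=
        prime_dvd_sqfreePart (Nat.factorial_ne_zero a) hprime (by rw [hfac])
      rw [← heq] at h2
      exact h2.trans (sqfreePart_dvd _)
    have hProd : (∏ p ∈ T, p) ∣ intervalProd N H :=
      Finset.prod_primes_dvd _ (fun p hp => (Finset.mem_filter.1 hp).2.prime) hdvd
    set P := ∏ p ∈ T, p with hPdef
    have hPpos : 0 < P :=
      Finset.prod_pos fun p hp => (Finset.mem_filter.1 hp).2.pos
    -- the central binomial chain
    have hchain : 4 ^ n ≤ n * ((2 * n) ^ Nat.sqrt (2 * n) * 4 ^ (2 * n / 3) * P) := by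
      have h1 := Nat.four_pow_lt_mul_centralBinom n (by omega)
      have h2 := centralBinom_le_prod n hn2
      calc 4 ^ n ≤ n * n.centralBinom := h1.le
      _ ≤ n * ((2 * n) ^ Nat.sqrt (2 * n) * 4 ^ (2 * n / 3) * P) :=
          Nat.mul_le_mul_left n h2
    have hlow : (n : ℝ) / 10 ≤ Real.log P := log_lower hn8 hPpos hchain
    -- upper bound on log P
    have hIub : intervalProd N H ≤ (2 * N) ^ H := by
      rw [intervalProd]
      calc ∏ i ∈ Finset.Icc 1 H, (N + i) ≤ ∏ _i ∈ Finset.Icc 1 H, (2 * N) := by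
            apply Finset.prod_le_prod' fun i hi => ?_
            have := (Finset.mem_Icc.mp hi).2
            omega
      _ = (2 * N) ^ H := by rw [Finset.prod_const, Nat.card_Icc, Nat.add_sub_cancel]
    have hPle : P ≤ (2 * N) ^ H :=
      le_trans (Nat.le_of_dvd (intervalProd_pos N H) hProd) hIub
    have hlogP : Real.log P ≤ (H : ℝ) * (2 * Real.log N) := by
      have h1 : Real.log P ≤ Real.log ((2 * N : ℕ) ^ H : ℕ) :=
        Real.log_le_log (by exact_mod_cast hPpos) (by exact_mod_cast hPle)
      have h2 : Real.log (((2 * N) ^ H : ℕ) : ℝ) = (H : ℝ) * Real.log ((2 * N : ℕ) : ℝ) := by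
        push_cast
        rw [Real.log_pow]
      have h3 : Real.log ((2 * N : ℕ) : ℝ) ≤ 2 * Real.log N := by
        push_cast
        rw [Real.log_mul (by norm_num) (by positivity)]
        have : Real.log 2 ≤ Real.log N :=
          Real.log_le_log (by norm_num) (by exact_mod_cast hN)
        linarith
      calc Real.log P ≤ (H : ℝ) * Real.log ((2 * N : ℕ) : ℝ) := by rw [← h2]; exact h1
      _ ≤ (H : ℝ) * (2 * Real.log N) := by
          apply mul_le_mul_of_nonneg_left h3 (by positivity)
    -- conclude
    have han : (a : ℝ) ≤ 3 * (n : ℝ) := by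
      have : (a : ℝ) ≤ 2 * (n : ℝ) + 1 := by exact_mod_cast ha2n
      have hn1 : (1 : ℝ) ≤ (n : ℝ) := by
        have : 1 ≤ n := by omega
        exact_mod_cast this
      linarith
    have : (n : ℝ) ≤ 20 * ((H : ℝ) * Real.log N) := by linarith
    linarith
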